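/- The 4×4 matrix g|_{Σ_τ} with entries g₁₁ = 1+μ/Σ, g₂₂ = Σ, g₃₃ = (r²+a²)sin²θ + a²sin⁴θ·μ/Σ, g₄₄ = (r²+b²)cos²θ + b²cos⁴θ·μ/Σ, g₁₃ = g₃₁ = −a sin²θ(1+μ/Σ), g₁₄ = g₄₁ = −b cos²θ(1+μ/Σ), g₃₄ = g₄₃ = ab sin²θ cos²θ·μ/Σ, and all other entries zero, is positive definite; in particular its four leading principal minors equal 1+μ/Σ, Σ+μ, (Σ+μ)(r²+a²cos²θ)sin²θ, and r²Σ(Σ+μ)sin²θcos²θ respectively, all of which are positive. -/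

import Mathlib

set_option maxHeartbeats 1000000 in
theorem det4_aux (M : Matrix (Fin 4) (Fin 4) ℝ) : M.det =
    M 0 0 * (M 1 1 * (M 2 2 * M 3 3 - M 2 3 * M 3 2) - M 1 2 * (M 2 1 * M 3 3 - M 2 3 * M 3 1)
      + M 1 3 * (M 2 1 * M 3 2 - M 2 2 * M 3 1))
  - M 0 1 * (M 1 0 * (M 2 2 * M 3 3 - M 2 3 * M 3 2) - M 1 2 * (M 2 0 * M 3 3 - M 2 3 * M 3 0)
      + M 1 3 * (M 2 0 * M 3 2 - M 2 2 * M 3 0))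
  + M 0 2 * (M 1 0 * (M 2 1 * M 3 3 - M 2 3 * M 3 1) - M 1 1 * (M 2 0 * M 3 3 - M 2 3 * M 3 0)
      + M 1 3 * (M 2 0 * M 3 1 - M 2 1 * M 3 0))
  - M 0 3 * (M 1 0 * (M 2 1 * M 3 2 - M 2 2 * M 3 1) - M 1 1 * (M 2 0 * M 3 2 - M 2 2 * M 3 0)
      + M 1 2 * (M 2 0 * M 3 1 - M 2 1 * M 3 0)) := by
  rw [Matrix.det_succ_row_zero]
  simp [Fin.sum_univ_succ, Matrix.det_fin_three, Matrix.submatrix_apply, Fin.succAbove,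
    show Fin.succ (2:Fin 3) = 3 from rfl, show Fin.castSucc (2:Fin 3) = 2 from rfl, - Fin.val_fin_lt]
  ring

set_option maxHeartbeats 2000000 in
/-- The induced spatial metric on constant-τ slices of the 5D Myers-Perry geometry in
Eddington–Finkelstein-type coordinates is positive definite; its four leading principal
minors equal 1+μ/S, Σ+μ, (Σ+μ)(r²+a²cos²θ)sin²θ and r²Σ(Σ+μ)sin²θcos²θ, all positive. -/
theorem stmt4 (a b r μ θ : ℝ) (hr : 0 < r) (hμ : 0 < μ)
    (hθ1 : 0 < θ) (hθ2 : θ < Real.pi/2)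
    (S : ℝ) (hS : S = r^2 + a^2*(Real.cos θ)^2 + b^2*(Real.sin θ)^2)
    (g : Matrix (Fin 4) (Fin 4) ℝ)
    (hg : g = !![1 + μ/S, 0, -a*(Real.sin θ)^2*(1 + μ/S), -b*(Real.cos θ)^2*(1 + μ/S);
                 0, S, 0, 0;
                 -a*(Real.sin θ)^2*(1 + μ/S), 0,
                   (r^2+a^2)*(Real.sin θ)^2 + a^2*(Real.sin θ)^4*(μ/S),
                   a*b*(Real.sin θ)^2*(Real.cos θ)^2*(μ/S);
                 -b*(Real.cos θ)^2*(1 + μ/S), 0,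
                   a*b*(Real.sin θ)^2*(Real.cos θ)^2*(μ/S),
                   (r^2+b^2)*(Real.cos θ)^2 + b^2*(Real.cos θ)^4*(μ/S)]) :
    g.PosDef ∧
    (!![g 0 0]).det = 1 + μ/S ∧
    (!![g 0 0, g 0 1; g 1 0, g 1 1]).det = S + μ ∧
    (!![g 0 0, g 0 1, g 0 2; g 1 0, g 1 1, g 1 2; g 2 0, g 2 1, g 2 2]).det
      = (S + μ)*(r^2 + a^2*(Real.cos θ)^2)*(Real.sin θ)^2 ∧
    g.det = r^2*S*(S + μ)*(Real.sin θ)^2*(Real.cos θ)^2 ∧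
    0 < 1 + μ/S ∧ 0 < S + μ ∧
    0 < (S + μ)*(r^2 + a^2*(Real.cos θ)^2)*(Real.sin θ)^2 ∧
    0 < r^2*S*(S + μ)*(Real.sin θ)^2*(Real.cos θ)^2 := by
  have hpy := Real.sin_sq_add_cos_sq θ
  have hsin : 0 < Real.sin θ := Real.sin_pos_of_pos_of_lt_pi hθ1
    (by nlinarith [Real.pi_pos])
  have hcos : 0 < Real.cos θ := Real.cos_pos_of_mem_Ioo
    ⟨by nlinarith [Real.pi_pos], hθ2⟩
  have hc2 : Real.cos θ ^ 2 = 1 - Real.sin θ ^ 2 := by linarith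
  have hc4 : Real.cos θ ^ 4 = (1 - Real.sin θ ^ 2)^2 := by
    rw [show Real.cos θ ^ 4 = (Real.cos θ ^ 2)^2 by ring, hc2]
  have hS0 : 0 < S := by
    rw [hS]; nlinarith [sq_nonneg (a*Real.cos θ), sq_nonneg (b*Real.sin θ)]
  have hSne : S ≠ 0 := hS0.ne'
  have hA0 : 0 < r^2 + a^2*Real.cos θ^2 := by nlinarith [sq_nonneg (a*Real.cos θ)]
  have hd0 : 0 < μ / S := div_pos hμ hS0
  have hmu : μ = μ/S * S := (div_mul_cancel₀ μ hSne).symm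
  have sqpos : ∀ y : ℝ, y ≠ 0 → 0 < y^2 := fun y hy =>
    lt_of_le_of_ne (sq_nonneg y) (Ne.symm (pow_ne_zero 2 hy))
  subst hg
  refine ⟨Matrix.PosDef.of_dotProduct_mulVec_pos ?_ ?_, ?_, ?_, ?_, ?_, ?_, ?_, ?_, ?_⟩
  · ext i j
    fin_cases i <;> fin_cases j <;>
      simp [Matrix.conjTranspose_apply, Matrix.vecHead, Matrix.vecTail]
  · intro x hx
    simp [dotProduct, Matrix.mulVec, Fin.sum_univ_four, Matrix.vecHead,
      Matrix.vecTail]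
    generalize hdg : μ / S = d
    rw [hdg] at hd0
    have key : (x 0 * ((1 + d) * x 0 + -(a * Real.sin θ ^ 2 * (1 + d) * x 2) +
          -(b * Real.cos θ ^ 2 * (1 + d) * x 3)) + x 1 * (S * x 1) +
        x 2 * (-(a * Real.sin θ ^ 2 * (1 + d) * x 0) +
            ((r ^ 2 + a ^ 2) * Real.sin θ ^ 2 + a ^ 2 * Real.sin θ ^ 4 * d) * x 2 +
          a * b * Real.sin θ ^ 2 * Real.cos θ ^ 2 * d * x 3) +
        x 3 * (-(b * Real.cos θ ^ 2 * (1 + d) * x 0) +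
            a * b * Real.sin θ ^ 2 * Real.cos θ ^ 2 * d * x 2 +
          ((r ^ 2 + b ^ 2) * Real.cos θ ^ 2 + b ^ 2 * Real.cos θ ^ 4 * d) * x 3))
        * (r^2 + a^2*Real.cos θ^2) =
        (1 + d)*(r^2 + a^2*Real.cos θ^2)*
            (x 0 - a*Real.sin θ^2*x 2 - b*Real.cos θ^2*x 3)^2
        + S*(r^2 + a^2*Real.cos θ^2)*(x 1)^2
        + Real.sin θ^2*((r^2 + a^2*Real.cos θ^2)*x 2 - a*b*Real.cos θ^2*x 3)^2
        + Real.cos θ^2*r^2*S*(x 3)^2 := by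
      rw [hS, hc4, hc2]; ring
    have n1 : 0 ≤ (1 + d)*(r^2 + a^2*Real.cos θ^2)*
        (x 0 - a*Real.sin θ^2*x 2 - b*Real.cos θ^2*x 3)^2 :=
      mul_nonneg (mul_nonneg (by linarith) hA0.le) (sq_nonneg _)
    have n2 : 0 ≤ S*(r^2 + a^2*Real.cos θ^2)*(x 1)^2 :=
      mul_nonneg (mul_nonneg hS0.le hA0.le) (sq_nonneg _)
    have n3 : 0 ≤ Real.sin θ^2*((r^2 + a^2*Real.cos θ^2)*x 2 - a*b*Real.cos θ^2*x 3)^2 :=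
      mul_nonneg (sq_nonneg _) (sq_nonneg _)
    have n4 : 0 ≤ Real.cos θ^2*r^2*S*(x 3)^2 :=
      mul_nonneg (mul_nonneg (mul_nonneg (sq_nonneg _) (sq_nonneg _)) hS0.le) (sq_nonneg _)
    have hRHS : 0 < (1 + d)*(r^2 + a^2*Real.cos θ^2)*
            (x 0 - a*Real.sin θ^2*x 2 - b*Real.cos θ^2*x 3)^2
        + S*(r^2 + a^2*Real.cos θ^2)*(x 1)^2
        + Real.sin θ^2*((r^2 + a^2*Real.cos θ^2)*x 2 - a*b*Real.cos θ^2*x 3)^2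
        + Real.cos θ^2*r^2*S*(x 3)^2 := by
      by_cases h3 : x 3 = 0
      · by_cases h2 : x 2 = 0
        · by_cases h1 : x 1 = 0
          · have h0 : x 0 ≠ 0 := by
              intro h0
              apply hx
              ext i
              fin_cases i <;> simpa using ‹_›
            have hin : x 0 - a*Real.sin θ^2*x 2 - b*Real.cos θ^2*x 3 ≠ 0 := by
              rw [h2, h3]; simpa using h0
            have p1 : 0 < (1 + d)*(r^2 + a^2*Real.cos θ^2)*
                (x 0 - a*Real.sin θ^2*x 2 - b*Real.cos θ^2*x 3)^2 :=
              mul_pos (mul_pos (by linarith) hA0) (sqpos _ hin)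
            linarith
          · have p2 : 0 < S*(r^2 + a^2*Real.cos θ^2)*(x 1)^2 :=
              mul_pos (mul_pos hS0 hA0) (sqpos _ h1)
            linarith
        · have hin : (r^2 + a^2*Real.cos θ^2)*x 2 - a*b*Real.cos θ^2*x 3 ≠ 0 := by
            rw [h3]; simpa using mul_ne_zero hA0.ne' h2
          have p3 : 0 < Real.sin θ^2*
              ((r^2 + a^2*Real.cos θ^2)*x 2 - a*b*Real.cos θ^2*x 3)^2 :=
            mul_pos (pow_pos hsin 2) (sqpos _ hin)
          linarith
      · have p4 : 0 < Real.cos θ^2*r^2*S*(x 3)^2 :=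
          mul_pos (mul_pos (mul_pos (pow_pos hcos 2) (pow_pos hr 2)) hS0)
            (sqpos _ h3)
        linarith
    nlinarith [key, hRHS, hA0]
  · simp [Matrix.det_fin_one]
  · simp [Matrix.det_fin_two]
    field_simp
  · simp only [Matrix.det_fin_three]
    simp [Matrix.vecHead, Matrix.vecTail]
    conv_rhs => rw [hmu]
    generalize μ/S = d
    rw [hc2]
    ring
  · rw [det4_aux]
    simp [Matrix.vecHead, Matrix.vecTail]
    conv_rhs => rw [hmu]
    generalize μ/S = d
    rw [hS, hc4, hc2]
    ring
  · linarith
  · linarith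
  · exact mul_pos (mul_pos (by linarith) hA0) (pow_pos hsin 2)
  · exact mul_pos (mul_pos (mul_pos (mul_pos (pow_pos hr 2) hS0) (by linarith))
      (pow_pos hsin 2)) (pow_pos hcos 2)
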